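/- Let $V$ be an integrable module over $U_q(\mathfrak{sl}_2)$ (quantum parameter not a root of unity, base field), $\varphi$ a linear endomorphism of $V$ of weight $\mu$ with $\langle h, \mu \rangle < 0$, such that $e\varphi = c\, \varphi e$ for some nonzero scalar $c$. Then $\varphi = 0$. -/

import Mathlib

namespace WEV
variable {k : Type*} [Field k]

noncomputable def bq (q : kˣ) (m : ℤ) : k := ((q ^ m : kˣ) : k) - ((q ^ (-m) : kˣ) : k)

lemma bq_ne_zero (q : kˣ) (hq : ∀ n : ℕ, 0 < n → (q : k) ^ n ≠ 1) {m : ℤ} (hm : m ≠ 0) :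
    bq q m ≠ 0 := by
  intro h
  have h2 : (q ^ m : kˣ) = q ^ (-m) := Units.ext (sub_eq_zero.mp h)
  have h3 : q ^ (2 * m) = 1 := by
    rw [two_mul, zpow_add]
    nth_rewrite 1 [h2]
    rw [← zpow_add, neg_add_cancel, zpow_zero]
  have h4 : q ^ ((2 * m).natAbs) = 1 := by
    rcases Int.natAbs_eq (2 * m) with he | he
    · rw [← zpow_natCast, ← he, h3]
    · rw [← zpow_natCast, ← neg_neg ((((2*m).natAbs : ℤ))), ← he, zpow_neg, h3, inv_one]
  have h5 : ((q : k)) ^ ((2 * m).natAbs) = 1 := by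
    rw [← Units.val_pow_eq_pow_val, h4, Units.val_one]
  exact hq _ (Int.natAbs_pos.mpr (by omega)) h5 |>.elim

lemma keyfield (A A1 B B1 C C1 : k) (ha : A * A1 = 1) (hb : B * B1 = 1) (hc : C * C1 = 1) :
    (A*C - A1*C1) * (B*A1 - B1*A)
      + (C - C1) * (B*A1*A1*C1*C1 - B1*A*A*C*C)
      = (A*C*C - A1*C1*C1) * (B*A1*C1 - B1*A*C) := by
  linear_combination (B1*C1 - B1*C*C1^2 + B*C - B*C^2*C1) * ha
    + (-(B1*C1) - B*C + A1^2*B*C1 + A^2*B1*C) * hc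

lemma SI (q : kˣ) (x y : ℤ) :
    bq q (x + 1) * bq q (y - x) + bq q 1 * bq q (y - 2 * x - 2)
      = bq q (x + 2) * bq q (y - x - 1) := by
  have hQ : ∀ a b : ℤ, ((q ^ (a + b) : kˣ) : k) = ((q ^ a : kˣ) : k) * ((q ^ b : kˣ) : k) := by
    intro a b; rw [zpow_add]; push_cast; ring
  have hE : ∀ a b : ℤ, a = b → ((q ^ a : kˣ) : k) = ((q ^ b : kˣ) : k) := by
    intro a b h; rw [h]
  have hinv : ∀ a : ℤ, ((q ^ a : kˣ) : k) * ((q ^ (-a) : kˣ) : k) = 1 := by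
    intro a; rw [← Units.val_mul, ← zpow_add, add_neg_cancel, zpow_zero, Units.val_one]
  set A := ((q ^ x : kˣ) : k)
  set A1 := ((q ^ (-x) : kˣ) : k)
  set B := ((q ^ y : kˣ) : k)
  set B1 := ((q ^ (-y) : kˣ) : k)
  set C := ((q ^ (1:ℤ) : kˣ) : k)
  set C1 := ((q ^ (-1:ℤ) : kˣ) : k)
  have e1 : ((q ^ (x+1) : kˣ) : k) = A * C := hQ x 1
  have e2 : ((q ^ (-(x+1)) : kˣ) : k) = A1 * C1 := by
    rw [hE _ (-x + -1) (by ring), hQ]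
  have e3 : ((q ^ (y - x) : kˣ) : k) = B * A1 := by rw [hE _ (y + -x) (by ring), hQ]
  have e4 : ((q ^ (-(y - x)) : kˣ) : k) = B1 * A := by rw [hE _ (-y + x) (by ring), hQ]
  have e5 : ((q ^ (y - 2*x - 2) : kˣ) : k) = B * A1 * A1 * C1 * C1 := by
    rw [hE _ (y + -x + -x + -1 + -1) (by ring), hQ, hQ, hQ, hQ]
  have e6 : ((q ^ (-(y - 2*x - 2)) : kˣ) : k) = B1 * A * A * C * C := by
    rw [hE _ (-y + x + x + 1 + 1) (by ring), hQ, hQ, hQ, hQ]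
  have e7 : ((q ^ (x + 2) : kˣ) : k) = A * C * C := by
    rw [hE _ (x + 1 + 1) (by ring), hQ, hQ]
  have e8 : ((q ^ (-(x + 2)) : kˣ) : k) = A1 * C1 * C1 := by
    rw [hE _ (-x + -1 + -1) (by ring), hQ, hQ]
  have e9 : ((q ^ (y - x - 1) : kˣ) : k) = B * A1 * C1 := by
    rw [hE _ (y + -x + -1) (by ring), hQ, hQ]
  have e10 : ((q ^ (-(y - x - 1)) : kˣ) : k) = B1 * A * C := by
    rw [hE _ (-y + x + 1) (by ring), hQ, hQ]
  simp only [bq, e1, e2, e3, e4, e5, e6, e7, e8, e9, e10]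
  exact keyfield A A1 B B1 C C1 (hinv x) (hinv y) (hinv 1)

section
variable {k : Type*} [Field k]
variable {V : Type*} [AddCommGroup V] [Module k V]

lemma Fpow_mem {W : ℤ → Submodule k V} {F : Module.End k V}
    (hF : ∀ n : ℤ, ∀ v ∈ W n, F v ∈ W (n - 2)) :
    ∀ m : ℕ, ∀ n : ℤ, ∀ v ∈ W n, (F ^ m) v ∈ W (n - 2 * m) := by
  intro m
  induction m with
  | zero => intro n v hv; simpa using hv
  | succ m ih =>
    intro n v hv
    rw [pow_succ']
    have := hF _ _ (ih n v hv)
    rw [Module.End.mul_apply]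
    convert this using 2
    push_cast; ring

lemma Epow_mem {W : ℤ → Submodule k V} {E : Module.End k V}
    (hE : ∀ n : ℤ, ∀ v ∈ W n, E v ∈ W (n + 2)) :
    ∀ m : ℕ, ∀ n : ℤ, ∀ v ∈ W n, (E ^ m) v ∈ W (n + 2 * m) := by
  intro m
  induction m with
  | zero => intro n v hv; simpa using hv
  | succ m ih =>
    intro n v hv
    rw [pow_succ']
    have := hE _ _ (ih n v hv)
    rw [Module.End.mul_apply]
    convert this using 2
    push_cast; ring

section
variable (q : kˣ) {W : ℤ → Submodule k V} {E F : Module.End k V}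

/-- commutation formula on a lowering string starting from a vector killed by `E`. -/
lemma Ekills
    (hF : ∀ n : ℤ, ∀ v ∈ W n, F v ∈ W (n - 2))
    (hEF : ∀ n : ℤ, ∀ v ∈ W n, bq q 1 • (E (F v) - F (E v)) = bq q n • v)
    {n : ℤ} {v : V} (hv : v ∈ W n) (h0 : E v = 0) :
    ∀ j : ℕ, (bq q 1 * bq q 1) • E ((F ^ (j+1)) v)
      = (bq q ((j:ℤ) + 1) * bq q (n - (j:ℤ))) • (F ^ j) v := by
  intro j
  induction j with
  | zero =>
    have h := hEF n v hv
    rw [h0, map_zero, sub_zero] at h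
    rw [pow_one, pow_zero, Module.End.one_apply, mul_smul, h, smul_smul]
    norm_num
  | succ j ih =>
    set w := (F ^ (j+1)) v with hw
    have hwmem : w ∈ W (n - 2 * (j+1)) := Fpow_mem hF (j+1) n v hv
    have h := hEF _ w hwmem
    rw [smul_sub, sub_eq_iff_eq_add] at h
    have h2 : (bq q 1 * bq q 1) • F (E w) = (bq q ((j:ℤ)+1) * bq q (n - j)) • (F ^ (j+1)) v := by
      rw [mul_smul, ← map_smul, ← map_smul, ← mul_smul, ih, map_smul, pow_succ',
        Module.End.mul_apply]
    have h3 : (F ^ (j+1+1)) v = F w := by rw [hw, pow_succ', Module.End.mul_apply]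
    have hcast : (((j:ℕ)+1 : ℕ) : ℤ) = (j:ℤ) + 1 := by push_cast; ring
    rw [h3, hcast, mul_smul, h, smul_add, ← mul_smul, ← mul_smul, h2,
      ← hw, ← add_smul]
    congr 1
    rw [show n - 2*((j:ℤ)+1) = n - 2*(j:ℤ) - 2 by ring, show (j:ℤ)+1+1 = (j:ℤ)+2 by ring,
      add_comm, show n - ((j:ℤ)+1) = n - (j:ℤ) - 1 by ring]
    exact SI q (j:ℤ) n
end
end

section
variable {k : Type*} [Field k] {V : Type*} [AddCommGroup V] [Module k V]
variable (q : kˣ) {W : ℤ → Submodule k V} {E F : Module.End k V}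

lemma kerProp
    (hF : ∀ n : ℤ, ∀ v ∈ W n, F v ∈ W (n - 2))
    (hEF : ∀ n : ℤ, ∀ v ∈ W n, bq q 1 • (E (F v) - F (E v)) = bq q n • v)
    {n : ℤ} {v : V} (hv : v ∈ W n) (h0 : E v = 0) :
    ∀ m : ℕ, ((bq q 1 * bq q 1) ^ m) • (E ^ m) ((F ^ m) v)
      = (∏ i ∈ Finset.range m, (bq q ((i:ℤ)+1) * bq q (n - (i:ℤ)))) • v := by
  intro m
  induction m with
  | zero => simp
  | succ m ih =>
    have h1 : (E ^ m) (E ((F ^ (m+1)) v)) = (E ^ (m+1)) ((F ^ (m+1)) v) := by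
      rw [← Module.End.mul_apply, ← pow_succ]
    rw [← h1, pow_succ, mul_smul, ← map_smul, Ekills q hF hEF hv h0 m, map_smul,
      smul_smul, mul_comm ((bq q 1 * bq q 1) ^ m), ← smul_smul, ih, smul_smul,
      mul_comm (bq q ((m:ℤ)+1) * bq q (n - (m:ℤ))), ← Finset.prod_range_succ]

lemma kerSurj (hq : ∀ n : ℕ, 0 < n → (q : k) ^ n ≠ 1)
    (hF : ∀ n : ℤ, ∀ v ∈ W n, F v ∈ W (n - 2))
    (hEF : ∀ n : ℤ, ∀ v ∈ W n, bq q 1 • (E (F v) - F (E v)) = bq q n • v)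
    {N : ℕ} {v : V} (hv : v ∈ W (N:ℤ)) (h0 : E v = 0) :
    ∃ u ∈ W (-(N:ℤ)), (E ^ N) u = v := by
  set δ2 : k := bq q 1 * bq q 1 with hδ2
  have hδ : δ2 ≠ 0 := mul_ne_zero (bq_ne_zero q hq one_ne_zero) (bq_ne_zero q hq one_ne_zero)
  set P : k := ∏ i ∈ Finset.range N, (bq q ((i:ℤ)+1) * bq q ((N:ℤ) - (i:ℤ))) with hP
  have hPne : P ≠ 0 := by
    rw [hP]
    apply Finset.prod_ne_zero_iff.mpr
    intro i hi
    have hi' := Finset.mem_range.mp hi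
    exact mul_ne_zero (bq_ne_zero q hq (by omega)) (bq_ne_zero q hq (by omega))
  refine ⟨(δ2 ^ N * P⁻¹) • (F ^ N) v, ?_, ?_⟩
  · apply Submodule.smul_mem
    have := Fpow_mem hF N (N:ℤ) v hv
    convert this using 2
    push_cast; ring
  · have hk := kerProp q hF hEF hv h0 N
    rw [map_smul, mul_smul]
    rw [show (E ^ N) ((F ^ N) v) = (δ2 ^ N)⁻¹ • ((δ2 ^ N) • (E ^ N) ((F ^ N) v)) by
      rw [smul_smul, inv_mul_cancel₀ (pow_ne_zero _ hδ), one_smul]]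
    rw [hk, ← hP, smul_smul, smul_smul, smul_smul]
    rw [show δ2 ^ N * P⁻¹ * (δ2 ^ N)⁻¹ * P = 1 by field_simp, one_smul]

lemma claimA (hq : ∀ n : ℕ, 0 < n → (q : k) ^ n ≠ 1)
    (hF : ∀ n : ℤ, ∀ v ∈ W n, F v ∈ W (n - 2))
    (hEF : ∀ n : ℤ, ∀ v ∈ W n, bq q 1 • (E (F v) - F (E v)) = bq q n • v)
    (hFnil : ∀ v : V, ∃ m : ℕ, (F ^ m) v = 0)
    {n : ℤ} {v : V} (hv : v ∈ W n) (h0 : E v = 0) (hv0 : v ≠ 0) : 0 ≤ n := by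
  classical
  have hex := hFnil v
  have hp : (F ^ (Nat.find hex)) v = 0 := Nat.find_spec hex
  have hp0 : Nat.find hex ≠ 0 := by
    intro h
    rw [h, pow_zero, Module.End.one_apply] at hp
    exact hv0 hp
  obtain ⟨p', hp'⟩ : ∃ p', Nat.find hex = p' + 1 := ⟨Nat.find hex - 1, by omega⟩
  rw [hp'] at hp
  have hmin : (F ^ p') v ≠ 0 := Nat.find_min hex (by omega)
  have hE := Ekills q hF hEF hv h0 p'
  rw [hp, map_zero, smul_zero] at hE
  have := (smul_eq_zero.mp hE.symm).resolve_right hmin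
  rcases mul_eq_zero.mp this with h | h
  · exact absurd h (bq_ne_zero q hq (by omega))
  · by_contra hn
    exact bq_ne_zero q hq (show n - (p':ℤ) ≠ 0 by omega) h

lemma L2comm
    (hE : ∀ n : ℤ, ∀ v ∈ W n, E v ∈ W (n + 2))
    (hEF : ∀ n : ℤ, ∀ v ∈ W n, bq q 1 • (E (F v) - F (E v)) = bq q n • v) :
    ∀ j : ℕ, ∀ n : ℤ, ∀ v ∈ W n,
      bq q 1 • (E ^ (j+1)) (F v)
        = bq q 1 • F ((E ^ (j+1)) v)
          + (∑ i ∈ Finset.range (j+1), bq q (n + 2*(i:ℤ))) • (E ^ j) v := by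
  intro j
  induction j with
  | zero =>
    intro n v hv
    have h := hEF n v hv
    rw [smul_sub, sub_eq_iff_eq_add] at h
    simp only [zero_add, pow_one, pow_zero, Module.End.one_apply, Finset.sum_range_one,
      Nat.cast_zero, mul_zero, add_zero]
    rw [h]
    abel
  | succ j ih =>
    intro n v hv
    have h := hEF n v hv
    rw [smul_sub, sub_eq_iff_eq_add] at h
    have h1 : (E ^ (j+1)) (E (F v)) = (E ^ (j+1+1)) (F v) := by
      rw [← Module.End.mul_apply, ← pow_succ]
    have h3 : (E ^ (j+1)) (E v) = (E ^ (j+1+1)) v := by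
      rw [← Module.End.mul_apply, ← pow_succ]
    have h4 : (E ^ j) (E v) = (E ^ (j+1)) v := by
      rw [← Module.End.mul_apply, ← pow_succ]
    have hsum : ∑ i ∈ Finset.range (j+1+1), bq q (n + 2*(i:ℤ))
        = bq q n + ∑ i ∈ Finset.range (j+1), bq q ((n+2) + 2*(i:ℤ)) := by
      rw [Finset.sum_range_succ', add_comm]
      congr 1
      · norm_num
      · apply Finset.sum_congr rfl
        intro i _
        congr 1
        push_cast; ring
    rw [← h1, ← map_smul, h, map_add, map_smul, map_smul, ih (n+2) (E v) (hE n v hv),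
      h3, h4, hsum, add_smul]
    abel
end

section
variable {k : Type*} [Field k] {V : Type*} [AddCommGroup V] [Module k V]
variable (q : kˣ) {W : ℤ → Submodule k V} {E F : Module.End k V}

lemma surj (hq : ∀ n : ℕ, 0 < n → (q : k) ^ n ≠ 1)
    (hE : ∀ n : ℤ, ∀ v ∈ W n, E v ∈ W (n + 2))
    (hF : ∀ n : ℤ, ∀ v ∈ W n, F v ∈ W (n - 2))
    (hEF : ∀ n : ℤ, ∀ v ∈ W n, bq q 1 • (E (F v) - F (E v)) = bq q n • v) :
    ∀ m : ℕ, ∀ N : ℕ, ∀ v ∈ W (N:ℤ), (E ^ m) v = 0 →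
      ∃ u ∈ W (-(N:ℤ)), (E ^ N) u = v := by
  intro m
  induction m with
  | zero =>
    intro N v hv h0
    rw [pow_zero, Module.End.one_apply] at h0
    exact ⟨0, Submodule.zero_mem _, by rw [map_zero, h0]⟩
  | succ m ih =>
    intro N v hv h0
    have hEv : E v ∈ W (((N+2:ℕ)):ℤ) := by
      have := hE _ v hv
      convert this using 2 <;> push_cast <;> ring
    have hEv0 : (E ^ m) (E v) = 0 := by
      rw [← Module.End.mul_apply, ← pow_succ]; exact h0
    obtain ⟨u', hu'mem, hu'⟩ := ih (N+2) (E v) hEv hEv0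
    have hu'w : (E ^ (N+1)) u' ∈ W (N:ℤ) := by
      have := Epow_mem hE (N+1) _ u' hu'mem
      convert this using 2 <;> push_cast <;> ring
    have hwmem : v - (E ^ (N+1)) u' ∈ W (N:ℤ) := Submodule.sub_mem _ hv hu'w
    have hEw : E (v - (E ^ (N+1)) u') = 0 := by
      have h2 : E ((E ^ (N+1)) u') = E v := by
        rw [← Module.End.mul_apply, ← pow_succ', show N + 1 + 1 = N + 2 from rfl, hu']
      rw [map_sub, h2, sub_self]
    obtain ⟨u₀, hu₀mem, hu₀⟩ := kerSurj q hq hF hEF hwmem hEw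
    refine ⟨u₀ + E u', ?_, ?_⟩
    · apply Submodule.add_mem _ hu₀mem
      have := hE _ u' hu'mem
      convert this using 2 <;> push_cast <;> ring
    · rw [map_add, hu₀, ← Module.End.mul_apply, ← pow_succ]
      abel
end
end WEV
/-- Let `V` be an integrable `U_q(sl₂)`-module over a field `k` with `q` not a root of
unity: `V` has a weight space decomposition `V = ⊕_{n ∈ ℤ} W n` with `E`, `F` shifting
weights by `±2`, satisfying the `sl₂` commutation relation
`[E, F] = (Kⁿ - K⁻ⁿ)/(q - q⁻¹)` on `W n` and acting locally nilpotently.  If `φ` is a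
linear endomorphism of `V` of weight `μ < 0` such that `E ∘ φ = c · (φ ∘ E)` for some
nonzero scalar `c`, then `φ = 0`. -/
theorem weight_endo_vanishes {k : Type*} [Field k] {V : Type*} [AddCommGroup V] [Module k V]
    (q : kˣ) (hq : ∀ n : ℕ, 0 < n → (q : k) ^ n ≠ 1)
    (W : ℤ → Submodule k V) (hW : DirectSum.IsInternal W)
    (E F : Module.End k V)
    (hE : ∀ n : ℤ, ∀ v ∈ W n, E v ∈ W (n + 2))
    (hF : ∀ n : ℤ, ∀ v ∈ W n, F v ∈ W (n - 2))
    (hEF : ∀ n : ℤ, ∀ v ∈ W n,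
      ((q : k) - ((q⁻¹ : kˣ) : k)) • (E (F v) - F (E v))
        = (((q ^ n : kˣ) : k) - ((q ^ (-n) : kˣ) : k)) • v)
    (hEnil : ∀ v : V, ∃ m : ℕ, (E ^ m) v = 0)
    (hFnil : ∀ v : V, ∃ m : ℕ, (F ^ m) v = 0)
    (μ : ℤ) (hμ : μ < 0) (φ : Module.End k V)
    (hφ : ∀ n : ℤ, ∀ v ∈ W n, φ v ∈ W (n + μ))
    (c : k) (hc : c ≠ 0)
    (hcom : ∀ v : V, E (φ v) = c • φ (E v)) :
    φ = 0 := by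
  classical
  -- rewrite the commutation relation using `bq`
  have hone : ((q : k) - ((q⁻¹ : kˣ) : k)) = WEV.bq q 1 := by
    rw [WEV.bq, zpow_one, zpow_neg, zpow_one]
  have hEF' : ∀ n : ℤ, ∀ v ∈ W n,
      WEV.bq q 1 • (E (F v) - F (E v)) = WEV.bq q n • v := by
    intro n v hv
    rw [← hone]
    exact hEF n v hv
  -- mirrored hypotheses (swap the roles of E and F, negate weights)
  have hE_M : ∀ n : ℤ, ∀ v ∈ W (-n), F v ∈ W (-(n + 2)) := by
    intro n v hv
    have := hF (-n) v hv
    rwa [show -n - 2 = -(n+2) by ring] at this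
  have hF_M : ∀ n : ℤ, ∀ v ∈ W (-n), E v ∈ W (-(n - 2)) := by
    intro n v hv
    have := hE (-n) v hv
    rwa [show -n + 2 = -(n-2) by ring] at this
  have hEF_M : ∀ n : ℤ, ∀ v ∈ W (-n),
      WEV.bq q 1 • (F (E v) - E (F v)) = WEV.bq q n • v := by
    intro n v hv
    have h := hEF' (-n) v hv
    have hb : WEV.bq q (-n) = - WEV.bq q n := by
      rw [WEV.bq, WEV.bq, neg_neg, neg_sub]
    rw [hb] at h
    calc WEV.bq q 1 • (F (E v) - E (F v))
        = -(WEV.bq q 1 • (E (F v) - F (E v))) := by rw [← smul_neg, neg_sub]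
      _ = -((- WEV.bq q n) • v) := by rw [h]
      _ = WEV.bq q n • v := by rw [neg_smul, neg_neg]
  -- injectivity of E^N on W(-N)
  have inj : ∀ d : ℕ, ∀ N : ℕ, ∀ v : V, v ∈ W (-(N:ℤ)) → (F ^ d) v = 0 →
      (E ^ N) v = 0 → v = 0 := by
    intro d
    induction d with
    | zero =>
      intro N v _ h0 _
      rw [pow_zero, Module.End.one_apply] at h0
      exact h0
    | succ d ih =>
      intro N v hv hFd hEN
      have hzz : ∀ jj : ℕ, (E ^ (jj + N)) v = 0 := by
        intro jj
        rw [pow_add, Module.End.mul_apply, hEN, map_zero]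
      have hFv : F v = 0 := by
        have hFvmem : F v ∈ W (-((N:ℤ) + 2)) := hE_M (N:ℤ) v hv
        have hFvmem' : F v ∈ W (-(((N+2:ℕ)):ℤ)) := by
          rwa [show (((N+2:ℕ)):ℤ) = (N:ℤ) + 2 by push_cast; ring]
        have hFd' : (F ^ d) (F v) = 0 := by
          rw [← Module.End.mul_apply, ← pow_succ]
          exact hFd
        have hL := WEV.L2comm q hE hEF' (N+1) (-(N:ℤ)) v hv
        have hz1 : (E ^ (N+1+1)) v = 0 := by
          have := hzz 2; rwa [show 2 + N = N + 1 + 1 by omega] at this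
        have hz2 : (E ^ (N+1)) v = 0 := by
          have := hzz 1; rwa [show 1 + N = N + 1 by omega] at this
        rw [hz1, hz2] at hL
        simp only [map_zero, smul_zero, add_zero] at hL
        have hδ : WEV.bq q 1 ≠ 0 := WEV.bq_ne_zero q hq one_ne_zero
        have hEN2 : (E ^ (N+1+1)) (F v) = 0 := (smul_eq_zero.mp hL).resolve_left hδ
        exact ih (N+2) (F v) hFvmem' hFd' (by rwa [show N+2 = N+1+1 from rfl])
      -- now v is killed by F; use the mirrored kerProp
      have hker := WEV.kerProp (W := fun n => W (-n)) (E := F) (F := E) q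
        hF_M hEF_M (n := (N:ℤ)) (v := v) hv hFv N
      rw [hEN, map_zero, smul_zero] at hker
      have hPne : (∏ i ∈ Finset.range N,
          (WEV.bq q ((i:ℤ)+1) * WEV.bq q ((N:ℤ) - (i:ℤ)))) ≠ 0 := by
        apply Finset.prod_ne_zero_iff.mpr
        intro i hi
        have hi' := Finset.mem_range.mp hi
        exact mul_ne_zero (WEV.bq_ne_zero q hq (by omega)) (WEV.bq_ne_zero q hq (by omega))
      exact (smul_eq_zero.mp hker.symm).resolve_left hPne
  -- power version of the commutation with φ
  have hcomPow : ∀ p : ℕ, ∀ x : V, (E ^ p) (φ x) = (c ^ p) • φ ((E ^ p) x) := by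
    intro p
    induction p with
    | zero => intro x; simp
    | succ p ih =>
      intro x
      have h1 : E ((E ^ p) (φ x)) = (E ^ (p+1)) (φ x) := by
        rw [← Module.End.mul_apply, ← pow_succ']
      have h2 : E ((E ^ p) x) = (E ^ (p+1)) x := by
        rw [← Module.End.mul_apply, ← pow_succ']
      rw [← h1, ih, map_smul, hcom, ← h2, smul_smul, pow_succ, mul_comm (c^p) c]
  -- main claim: φ vanishes on every weight space
  have main : ∀ n : ℤ, ∀ v ∈ W n, φ v = 0 := by
    intro n v hv
    by_contra hvne
    obtain ⟨m, hm⟩ := hEnil v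
    set Pj : ℕ → Prop := fun j => φ ((E ^ j) v) ≠ 0 with hPj
    have hP0 : Pj 0 := by simpa [hPj] using hvne
    have hj : Pj (Nat.findGreatest Pj m) := Nat.findGreatest_spec (Nat.zero_le m) hP0
    set j := Nat.findGreatest Pj m with hjdef
    have hnext : ∀ i : ℕ, j < i → φ ((E ^ i) v) = 0 := by
      intro i hi
      by_cases him : i ≤ m
      · have := Nat.findGreatest_is_greatest hi him
        simpa [hPj] using this
      · have hz : (E ^ i) v = 0 := by
          have hpow : E ^ i = E ^ (i - m) * E ^ m := by
            rw [← pow_add]; congr 1; omega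
          rw [hpow, Module.End.mul_apply, hm, map_zero]
        rw [hz, map_zero]
    have hymem : (E ^ j) v ∈ W (n + 2*(j:ℤ)) := WEV.Epow_mem hE j n v hv
    have hzne : φ ((E ^ j) v) ≠ 0 := hj
    have hzmem : φ ((E ^ j) v) ∈ W (n + 2*(j:ℤ) + μ) := hφ _ _ hymem
    have hEz : E (φ ((E ^ j) v)) = 0 := by
      rw [hcom]
      have hEy : E ((E ^ j) v) = (E ^ (j+1)) v := by
        rw [← Module.End.mul_apply, ← pow_succ']
      rw [hEy, hnext (j+1) (by omega), smul_zero]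
    have hge : 0 ≤ n + 2*(j:ℤ) + μ :=
      WEV.claimA q hq hF hEF' hFnil hzmem hEz hzne
    set N' : ℤ := n + 2*(j:ℤ) with hN'def
    have hN'pos : 0 < N' := by omega
    set Nn : ℕ := N'.toNat with hNndef
    have hNn : (Nn:ℤ) = N' := Int.toNat_of_nonneg (le_of_lt hN'pos)
    have hymem' : (E ^ j) v ∈ W ((Nn:ℤ)) := by rw [hNn]; exact hymem
    obtain ⟨mE, hmE⟩ := hEnil ((E ^ j) v)
    obtain ⟨u', hu'mem, hu'⟩ := WEV.surj q hq hE hF hEF' mE Nn ((E ^ j) v) hymem' hmE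
    have hxmem : φ u' ∈ W (-(Nn:ℤ) + μ) := hφ _ u' hu'mem
    have hx1 : (E ^ Nn) (φ u') = (c ^ Nn) • φ ((E ^ j) v) := by
      rw [hcomPow, hu']
    have hx1ne : (E ^ Nn) (φ u') ≠ 0 := by
      rw [hx1]
      exact smul_ne_zero (pow_ne_zero _ hc) hzne
    have hx2 : (E ^ (Nn+1)) (φ u') = 0 := by
      have h1 : E ((E ^ Nn) (φ u')) = (E ^ (Nn+1)) (φ u') := by
        rw [← Module.End.mul_apply, ← pow_succ']
      rw [← h1, hx1, map_smul, hEz, smul_zero]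
    set M : ℕ := (N' - μ).toNat with hMdef
    have hM : (M:ℤ) = N' - μ := Int.toNat_of_nonneg (by omega)
    have hxmem' : φ u' ∈ W (-(M:ℤ)) := by
      have : -(M:ℤ) = -(Nn:ℤ) + μ := by rw [hM, hNn]; ring
      rw [this]; exact hxmem
    have hMx : (E ^ M) (φ u') = 0 := by
      have hle : Nn + 1 ≤ M := by omega
      have hpow : E ^ M = E ^ (M - (Nn+1)) * E ^ (Nn+1) := by
        rw [← pow_add]; congr 1; omega
      rw [hpow, Module.End.mul_apply, hx2, map_zero]
    obtain ⟨dF, hdF⟩ := hFnil (φ u')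
    have : φ u' = 0 := inj dF M (φ u') hxmem' hdF hMx
    rw [this, map_zero] at hx1ne
    exact hx1ne rfl
  -- conclude
  ext v
  have hv : v ∈ ⨆ i, W i := by
    rw [hW.submodule_iSup_eq_top]; trivial
  simp only [LinearMap.zero_apply]
  refine Submodule.iSup_induction W (motive := fun x => φ x = 0) hv ?_ (map_zero φ) ?_
  · intro i x hx; exact main i x hx
  · intro x y hx hy; rw [map_add, hx, hy, add_zero]
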